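/- Let f : 2^[n] → ℝ be a nonnegative submodular set function, let S ⊆ [n] be nonempty, and let {S_1, …, S_k} be a partition of S into k pairwise disjoint subsets. If f(S \ S_i) < (1 − 1/k)·f(S) holds for every i ∈ {1, …, k}, then for every i ∈ {1, …, k} one has f(S \ (S_1 ∪ ⋯ ∪ S_i)) < (1 − i/k)·f(S). -/

import Mathlib

/-- Induction step in the proof of the partition lemma: if `f` is nonnegative submodular,
`{S_1, …, S_k}` partitions the nonempty set `S`, and `f(S \ S_i) < (1 - 1/k) f(S)` for
every `i`, then `f(S \ (S_1 ∪ ⋯ ∪ S_i)) < (1 - i/k) f(S)` for every `i`. -/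
theorem submodular_partition_induction (n k : ℕ)
    (f : Finset (Fin n) → ℝ)
    (hnn : ∀ S, 0 ≤ f S)
    (hsub : ∀ S T, f (S ∪ T) + f (S ∩ T) ≤ f S + f T)
    (S : Finset (Fin n)) (hS : S.Nonempty)
    (P : Fin k → Finset (Fin n))
    (hPdisj : ∀ i j, i ≠ j → Disjoint (P i) (P j))
    (hPcov : Finset.univ.biUnion P = S)
    (hbad : ∀ i : Fin k, f (S \ P i) < (1 - 1/(k : ℝ)) * f S) :
    ∀ i : Fin k, f (S \ (Finset.Iic i).biUnion P) <
      (1 - ((i : ℕ) + 1)/(k : ℝ)) * f S := by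
  intro i
  rcases k with _ | k
  · exact i.elim0
  induction i using Fin.induction with
  | zero =>
      have h0 : (Finset.Iic (0 : Fin (k + 1))).biUnion P = P 0 := by
        have : Finset.Iic (0 : Fin (k + 1)) = {0} := by
          ext j; simp only [Finset.mem_Iic, Finset.mem_singleton, Fin.le_zero_iff]
        simp [this]
      have := hbad 0
      rw [h0]
      simpa using this
  | succ i ih =>
      set B := (Finset.Iic i.castSucc).biUnion P with hBdef
      have hIic : Finset.Iic i.succ = insert i.succ (Finset.Iic i.castSucc) := by
        ext j; simp [Fin.le_def, Fin.ext_iff]; omega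
      have hB' : (Finset.Iic i.succ).biUnion P = B ∪ P i.succ := by
        rw [hIic, Finset.biUnion_insert, Finset.union_comm]
      have hdisj : Disjoint B (P i.succ) := by
        rw [hBdef, Finset.disjoint_biUnion_left]
        intro j hj
        apply hPdisj
        intro hEq
        have hj' : j ≤ i.castSucc := Finset.mem_Iic.mp hj
        have : j.val ≤ i.val := hj'
        rw [hEq] at this
        simp [Fin.val_succ] at this
      have e1 : (S \ B) ∪ (S \ P i.succ) = S := by
        ext x
        simp only [Finset.mem_union, Finset.mem_sdiff]
        constructor
        · rintro (⟨h, _⟩ | ⟨h, _⟩) <;> exact h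
        · intro hx
          by_cases hxB : x ∈ B
          · exact Or.inr ⟨hx, fun hxP => Finset.disjoint_left.mp hdisj hxB hxP⟩
          · exact Or.inl ⟨hx, hxB⟩
      have e2 : (S \ B) ∩ (S \ P i.succ) = S \ (B ∪ P i.succ) := by
        ext x
        simp only [Finset.mem_inter, Finset.mem_sdiff, Finset.mem_union]
        tauto
      have hsm := hsub (S \ B) (S \ P i.succ)
      rw [e1, e2] at hsm
      have hb := hbad i.succ
      rw [hB']
      have hcoef : ((i.succ : ℕ) + 1 : ℝ) / ((k + 1 : ℕ) : ℝ)
          = ((i.castSucc : ℕ) + 1 : ℝ) / ((k + 1 : ℕ) : ℝ) + 1 / ((k + 1 : ℕ) : ℝ) := by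
        simp only [Fin.val_succ, Fin.coe_castSucc]
        push_cast
        rw [← add_div]
      have key : (1 - ((i.succ : ℕ) + 1) / ((k + 1 : ℕ) : ℝ)) * f S
          = (1 - ((i.castSucc : ℕ) + 1) / ((k + 1 : ℕ) : ℝ)) * f S
            + (1 - 1 / ((k + 1 : ℕ) : ℝ)) * f S - f S := by
        rw [hcoef]; ring
      linarith
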